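/- Let γ be an oriented simple lattice cycle and let v be a vertex of γ at which γ goes straight, i.e. angle(γ,v) = 0. Then there exists k ∈ ℤ such that exactly two of the four points of N_v have winding number k and the other two have winding number k+1; consequently metricw(γ,v) = topw(γ,v) = k + 1/2, and in particular topw(γ,v) − metricw(γ,v) = 0. -/
import Mathlib


open scoped Classical

/-- An oriented simple lattice cycle in the grid graph on `ℤ²`: a cyclic sequence
`v 0, v 1, …, v (n-1), v n = v 0` (encoded as an `n`-periodic function `ℕ → ℤ × ℤ`),
with `n ≥ 4`, vertices pairwise distinct within one period, and consecutive
vertices at Euclidean distance `1`. -/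
structure LatticeCycle where
  n : ℕ
  four_le : 4 ≤ n
  v : ℕ → ℤ × ℤ
  periodic : ∀ i, v (i + n) = v i
  inj : ∀ i j, i < n → j < n → v i = v j → i = j
  step : ∀ i, v (i + 1) - v i = (1, 0) ∨ v (i + 1) - v i = (-1, 0) ∨
    v (i + 1) - v i = (0, 1) ∨ v (i + 1) - v i = (0, -1)

/-- Inclusion of `ℤ²` into `ℝ²`. -/
def toR (v : ℤ × ℤ) : ℝ × ℝ := ((v.1 : ℝ), (v.2 : ℝ))

/-- The image of a lattice cycle: the union of the closed segments `[vᵢ, vᵢ₊₁] ⊆ ℝ²`. -/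
def LatticeCycle.image (γ : LatticeCycle) : Set (ℝ × ℝ) :=
  ⋃ i ∈ Finset.range γ.n, segment ℝ (toR (γ.v i)) (toR (γ.v (i + 1)))

/-- Signed crossing of the directed edge `u → w` with the rightward horizontal ray
from `p`: an edge from `(a,b)` to `(a,b+1)` contributes `+1`, and an edge from
`(a,b+1)` to `(a,b)` contributes `-1`, whenever `a > p₁` and `b ≤ p₂ < b + 1`. -/
noncomputable def vcross (u w : ℤ × ℤ) (p : ℝ × ℝ) : ℤ :=
  if w = (u.1, u.2 + 1) ∧ p.1 < (u.1 : ℝ) ∧ (u.2 : ℝ) ≤ p.2 ∧ p.2 < (u.2 : ℝ) + 1 then 1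
  else if u = (w.1, w.2 + 1) ∧ p.1 < (w.1 : ℝ) ∧ (w.2 : ℝ) ≤ p.2 ∧ p.2 < (w.2 : ℝ) + 1 then -1
  else 0

/-- The winding number of `γ` around `p`: the signed number of directed vertical
edges of `γ` crossing the rightward horizontal ray from `p`. -/
noncomputable def wind (γ : LatticeCycle) (p : ℝ × ℝ) : ℤ :=
  ∑ i ∈ Finset.range γ.n, vcross (γ.v i) (γ.v (i + 1)) p

/-- `γ` is counterclockwise oriented: `wind(γ,p) ∈ {0,1}` for every `p` off the image. -/
def LatticeCycle.ccw (γ : LatticeCycle) : Prop :=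
  ∀ p : ℝ × ℝ, p ∉ γ.image → wind γ p = 0 ∨ wind γ p = 1

/-- `γ` is clockwise oriented: `wind(γ,p) ∈ {-1,0}` for every `p` off the image. -/
def LatticeCycle.cw (γ : LatticeCycle) : Prop :=
  ∀ p : ℝ × ℝ, p ∉ γ.image → wind γ p = -1 ∨ wind γ p = 0

/-- The point `v + (k/2, l/2)`; for `k, l ∈ {-1, 1}` these are the four points of `N_v`. -/
noncomputable def corner (v : ℤ × ℤ) (k l : ℤ) : ℝ × ℝ :=
  ((v.1 : ℝ) + (k : ℝ) / 2, (v.2 : ℝ) + (l : ℝ) / 2)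

/-- The metric weight of `v` with respect to `γ`:
`(1/4) · Σ_{u ∈ N_v} wind(γ,u)`. -/
noncomputable def metricw (γ : LatticeCycle) (v : ℤ × ℤ) : ℚ :=
  ((wind γ (corner v (-1) (-1)) + wind γ (corner v (-1) 1) +
    wind γ (corner v 1 (-1)) + wind γ (corner v 1 1) : ℤ) : ℚ) / 4

/-- The set of values `{wind(γ,u) : u ∈ N_v}` (each distinct value counted once). -/
noncomputable def windSet (γ : LatticeCycle) (v : ℤ × ℤ) : Finset ℤ :=
  {wind γ (corner v (-1) (-1)), wind γ (corner v (-1) 1),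
   wind γ (corner v 1 (-1)), wind γ (corner v 1 1)}

/-- The topological weight of `v` with respect to `γ`: the arithmetic mean of the
set of values `{wind(γ,u) : u ∈ N_v}`, each distinct value counted once. -/
noncomputable def topw (γ : LatticeCycle) (v : ℤ × ℤ) : ℚ :=
  (∑ k ∈ windSet γ v, (k : ℚ)) / ((windSet γ v).card : ℚ)

/-- The angle of `γ` at the vertex of index `i`: with `d_in = vᵢ - vᵢ₋₁` and
`d_out = vᵢ₊₁ - vᵢ`, it is `0` if `d_out = d_in`, `1/4` if `d_out` is `d_in`
rotated by 90° counterclockwise, `-1/4` if rotated by 90° clockwise. -/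
noncomputable def angleAt (γ : LatticeCycle) (i : ℕ) : ℚ :=
  let din := γ.v (i + γ.n) - γ.v (i + γ.n - 1)
  let dout := γ.v (i + 1) - γ.v i
  if dout = din then 0
  else if dout = (-din.2, din.1) then 1/4
  else if dout = (din.2, -din.1) then -1/4
  else 0

/-- `v` is a vertex of `γ`. -/
def LatticeCycle.isVertex (γ : LatticeCycle) (v : ℤ × ℤ) : Prop :=
  ∃ i, i < γ.n ∧ γ.v i = v

/-- The angle of `γ` at a point `v ∈ ℤ²`: the angle at the (unique) index of `v`
if `v` is a vertex of `γ`, and `0` otherwise. -/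
noncomputable def angle (γ : LatticeCycle) (v : ℤ × ℤ) : ℚ :=
  if h : γ.isVertex v then angleAt γ h.choose else 0

/-- The color of a lattice point: `1` if `x + y` is odd, `-1` if `x + y` is even. -/
def col (v : ℤ × ℤ) : ℤ := if Even (v.1 + v.2) then -1 else 1

/-- The enclosed charge `charge_int(γ) = Σ_{v ∈ ℤ², v ∉ image γ} col(v)·wind(γ,v)`. -/
noncomputable def chargeInt (γ : LatticeCycle) : ℤ :=
  ∑ᶠ v : ℤ × ℤ, if toR v ∉ γ.image then col v * wind γ (toR v) else 0

/-- The boundary charge `charge_∂(γ) = Σ_{v vertex of γ} angle(γ,v)·col(v)`. -/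
noncomputable def chargeBd (γ : LatticeCycle) : ℚ :=
  ∑ i ∈ Finset.range γ.n, angle γ (γ.v i) * (col (γ.v i) : ℚ)

section Aux

private lemma half_lt_iff (x k a : ℤ) : (x : ℝ) + (k : ℝ) / 2 < (a : ℝ) ↔ 2 * x + k < 2 * a := by
  constructor
  · intro h
    have h2 : ((2 * x + k : ℤ) : ℝ) < ((2 * a : ℤ) : ℝ) := by push_cast; linarith
    exact_mod_cast h2
  · intro h
    have h2 : ((2 * x + k : ℤ) : ℝ) < ((2 * a : ℤ) : ℝ) := by exact_mod_cast h
    push_cast at h2; linarith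

private lemma le_half_iff (b y l : ℤ) : (b : ℝ) ≤ (y : ℝ) + (l : ℝ) / 2 ↔ 2 * b ≤ 2 * y + l := by
  constructor
  · intro h
    have h2 : ((2 * b : ℤ) : ℝ) ≤ ((2 * y + l : ℤ) : ℝ) := by push_cast; linarith
    exact_mod_cast h2
  · intro h
    have h2 : ((2 * b : ℤ) : ℝ) ≤ ((2 * y + l : ℤ) : ℝ) := by exact_mod_cast h
    push_cast at h2; linarith

private lemma half_lt_add_iff (y l b : ℤ) : (y : ℝ) + (l : ℝ) / 2 < (b : ℝ) + 1 ↔ 2 * y + l < 2 * b + 2 := by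
  constructor
  · intro h
    have h2 : ((2 * y + l : ℤ) : ℝ) < ((2 * b + 2 : ℤ) : ℝ) := by push_cast; linarith
    exact_mod_cast h2
  · intro h
    have h2 : ((2 * y + l : ℤ) : ℝ) < ((2 * b + 2 : ℤ) : ℝ) := by exact_mod_cast h
    push_cast at h2; linarith

/-- Explicit integer description of `vcross` at a corner point. -/
private lemma vcross_corner (v u w : ℤ × ℤ) (k l : ℤ) (hl : l = -1 ∨ l = 1) :
    vcross u w (corner v k l) =
      if w = (u.1, u.2 + 1) ∧ 2 * v.1 + k < 2 * u.1 ∧ 2 * u.2 = 2 * v.2 + l - 1 then 1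
      else if u = (w.1, w.2 + 1) ∧ 2 * v.1 + k < 2 * w.1 ∧ 2 * w.2 = 2 * v.2 + l - 1 then -1
      else 0 := by
  have key : ∀ z : ℤ × ℤ,
      ((corner v k l).1 < (z.1 : ℝ) ∧ (z.2 : ℝ) ≤ (corner v k l).2 ∧ (corner v k l).2 < (z.2 : ℝ) + 1)
        ↔ (2 * v.1 + k < 2 * z.1 ∧ 2 * z.2 = 2 * v.2 + l - 1) := by
    intro z
    simp only [corner]
    rw [half_lt_iff, le_half_iff, half_lt_add_iff]
    rcases hl with h | h <;> subst h <;> omega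
  simp only [vcross, key]

/-- Horizontal pair: for an edge avoiding `v`, the crossing numbers at the
left and right corners of the same row agree. -/
private lemma edgeH (x y l : ℤ) (hl : l = -1 ∨ l = 1) (u w : ℤ × ℤ)
    (hs : w - u = (1, 0) ∨ w - u = (-1, 0) ∨ w - u = (0, 1) ∨ w - u = (0, -1))
    (hu : u ≠ (x, y)) (hw : w ≠ (x, y)) :
    vcross u w (corner (x, y) (-1) l) = vcross u w (corner (x, y) 1 l) := by
  obtain ⟨a, b⟩ := u
  obtain ⟨c, d⟩ := w
  rw [vcross_corner _ _ _ _ _ hl, vcross_corner _ _ _ _ _ hl]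
  simp only [ne_eq, Prod.mk_sub_mk, Prod.mk.injEq] at hs hu hw ⊢
  split_ifs <;> omega

set_option maxHeartbeats 1000000 in
/-- Vertical pair: for an edge avoiding `v`, the difference of crossing numbers at
the bottom and top corners of the same column is a discrete gradient. -/
private lemma edgeV (x y k : ℤ) (hk : k = -1 ∨ k = 1) (u w : ℤ × ℤ)
    (hs : w - u = (1, 0) ∨ w - u = (-1, 0) ∨ w - u = (0, 1) ∨ w - u = (0, -1))
    (hu : u ≠ (x, y)) (hw : w ≠ (x, y)) :
    vcross u w (corner (x, y) k (-1)) - vcross u w (corner (x, y) k 1)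
      = (if 2 * x + k < 2 * w.1 ∧ w.2 = y then (1 : ℤ) else 0)
        - (if 2 * x + k < 2 * u.1 ∧ u.2 = y then (1 : ℤ) else 0) := by
  obtain ⟨a, b⟩ := u
  obtain ⟨c, d⟩ := w
  rw [vcross_corner _ _ _ _ _ (Or.inl rfl), vcross_corner _ _ _ _ _ (Or.inr rfl)]
  simp only [ne_eq, Prod.mk_sub_mk, Prod.mk.injEq] at hs hu hw ⊢
  have hsub : (c = a + 1 ∧ d = b) ∨ (c = a - 1 ∧ d = b) ∨ (c = a ∧ d = b + 1) ∨
      (c = a ∧ d = b - 1) := by omega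
  clear hs
  rcases hk with rfl | rfl <;>
    rcases hsub with ⟨rfl, rfl⟩ | ⟨rfl, rfl⟩ | ⟨rfl, rfl⟩ | ⟨rfl, rfl⟩ <;>
    split_ifs <;> omega

/-- Master difference lemma: the difference of winding numbers at two points is
given by the two edges of `γ` through `γ.v i`, after subtracting a potential. -/
private lemma wind_sub (γ : LatticeCycle) (i ip : ℕ) (hi : i < γ.n) (hip : ip < γ.n)
    (hne : ip ≠ i)
    (huniq : ∀ j, j < γ.n → j ≠ ip → j ≠ i → γ.v j ≠ γ.v i ∧ γ.v (j + 1) ≠ γ.v i)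
    (p q : ℝ × ℝ) (F : ℤ × ℤ → ℤ)
    (H : ∀ j, j < γ.n → γ.v j ≠ γ.v i → γ.v (j + 1) ≠ γ.v i →
      vcross (γ.v j) (γ.v (j + 1)) p - vcross (γ.v j) (γ.v (j + 1)) q
        = F (γ.v (j + 1)) - F (γ.v j)) :
    wind γ p - wind γ q =
      (vcross (γ.v ip) (γ.v (ip + 1)) p - vcross (γ.v ip) (γ.v (ip + 1)) q
        - F (γ.v (ip + 1)) + F (γ.v ip))
      + (vcross (γ.v i) (γ.v (i + 1)) p - vcross (γ.v i) (γ.v (i + 1)) q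
        - F (γ.v (i + 1)) + F (γ.v i)) := by
  set G : ℕ → ℤ := fun j =>
    vcross (γ.v j) (γ.v (j + 1)) p - vcross (γ.v j) (γ.v (j + 1)) q
      - F (γ.v (j + 1)) + F (γ.v j) with hG
  have htel : ∑ j ∈ Finset.range γ.n, (F (γ.v (j + 1)) - F (γ.v j)) = 0 := by
    rw [Finset.sum_range_sub (fun j => F (γ.v j))]
    have h0 : γ.v (0 + γ.n) = γ.v 0 := γ.periodic 0
    rw [Nat.zero_add] at h0
    rw [h0, sub_self]
  have hsplit : wind γ p - wind γ q = ∑ j ∈ Finset.range γ.n, G j := by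
    have hcong : ∑ j ∈ Finset.range γ.n, G j
        = ∑ j ∈ Finset.range γ.n,
            ((vcross (γ.v j) (γ.v (j + 1)) p - vcross (γ.v j) (γ.v (j + 1)) q)
              - (F (γ.v (j + 1)) - F (γ.v j))) := by
      apply Finset.sum_congr rfl
      intro j _
      simp only [hG]
      ring
    rw [hcong, Finset.sum_sub_distrib, htel, sub_zero, Finset.sum_sub_distrib]
    rfl
  have hsub : ({ip, i} : Finset ℕ) ⊆ Finset.range γ.n := by
    intro j hj
    simp only [Finset.mem_insert, Finset.mem_singleton] at hj
    rcases hj with h | h <;> subst h <;> simp [Finset.mem_range, hi, hip]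
  have hvanish : ∀ j ∈ Finset.range γ.n, j ∉ ({ip, i} : Finset ℕ) → G j = 0 := by
    intro j hj hjn
    simp only [Finset.mem_range] at hj
    simp only [Finset.mem_insert, Finset.mem_singleton, not_or] at hjn
    obtain ⟨h1, h2⟩ := huniq j hj hjn.1 hjn.2
    simp only [hG]
    rw [H j hj h1 h2]
    ring
  rw [hsplit, ← Finset.sum_subset hsub hvanish, Finset.sum_pair hne]

private lemma multiset_swap4 (a b : ℤ) :
    ({a, a, b, b} : Multiset ℤ) = ({b, b, a, a} : Multiset ℤ) := by
  refine Multiset.ext.2 fun m => ?_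
  simp only [Multiset.insert_eq_cons, Multiset.count_cons, Multiset.count_singleton]
  split_ifs <;> omega

private lemma multiset_alt4 (a b : ℤ) :
    ({a, b, a, b} : Multiset ℤ) = ({a, a, b, b} : Multiset ℤ) := by
  refine Multiset.ext.2 fun m => ?_
  simp only [Multiset.insert_eq_cons, Multiset.count_cons, Multiset.count_singleton]
  split_ifs <;> omega

/-- Assembly: from the multiset identity, derive all the weight identities. -/
private lemma assemble (γ : LatticeCycle) (v : ℤ × ℤ) (k : ℤ)
    (h : ({wind γ (corner v (-1) (-1)), wind γ (corner v (-1) 1),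
        wind γ (corner v 1 (-1)), wind γ (corner v 1 1)} : Multiset ℤ) =
        ({k, k, k + 1, k + 1} : Multiset ℤ)) :
    ∃ k : ℤ,
      ({wind γ (corner v (-1) (-1)), wind γ (corner v (-1) 1),
        wind γ (corner v 1 (-1)), wind γ (corner v 1 1)} : Multiset ℤ) =
        ({k, k, k + 1, k + 1} : Multiset ℤ) ∧
      metricw γ v = (k : ℚ) + 1/2 ∧ topw γ v = (k : ℚ) + 1/2 ∧
      topw γ v - metricw γ v = 0 := by
  have hsum := congrArg Multiset.sum h
  simp only [Multiset.insert_eq_cons, Multiset.sum_cons, Multiset.sum_singleton] at hsum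
  have hmem : ∀ m : ℤ, m ∈ ({wind γ (corner v (-1) (-1)), wind γ (corner v (-1) 1),
      wind γ (corner v 1 (-1)), wind γ (corner v 1 1)} : Multiset ℤ)
      ↔ m ∈ ({k, k, k + 1, k + 1} : Multiset ℤ) := fun m => by rw [h]
  simp only [Multiset.insert_eq_cons, Multiset.mem_cons, Multiset.mem_singleton] at hmem
  have hmet : metricw γ v = (k : ℚ) + 1/2 := by
    unfold metricw
    rw [show wind γ (corner v (-1) (-1)) + wind γ (corner v (-1) 1) +
        wind γ (corner v 1 (-1)) + wind γ (corner v 1 1) = 4 * k + 2 from by omega]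
    push_cast
    ring
  have hws : windSet γ v = ({k, k + 1} : Finset ℤ) := by
    ext m
    unfold windSet
    simp only [Finset.mem_insert, Finset.mem_singleton]
    have := hmem m
    constructor
    · rintro (rfl | rfl | rfl | rfl) <;> omega
    · intro hm
      rcases this.2 (by omega) with rfl | h' | h' | h' <;> omega
  have htop : topw γ v = (k : ℚ) + 1/2 := by
    unfold topw
    rw [hws, Finset.sum_pair (show k ≠ k + 1 from by omega),
      Finset.card_pair (show k ≠ k + 1 from by omega)]
    push_cast
    ring
  exact ⟨k, h, hmet, htop, by rw [htop, hmet, sub_self]⟩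


set_option maxHeartbeats 1000000 in
/-- Boundary evaluation for a horizontal pair of corners (zero potential). -/
private lemma boundaryH (x y dx dy l : ℤ) (hl : l = -1 ∨ l = 1)
    (hd : dx = 1 ∧ dy = 0 ∨ dx = -1 ∧ dy = 0 ∨ dx = 0 ∧ dy = 1 ∨ dx = 0 ∧ dy = -1) :
    (vcross (x - dx, y - dy) (x, y) (corner (x, y) (-1) l)
      - vcross (x - dx, y - dy) (x, y) (corner (x, y) 1 l) - (0 : ℤ) + 0)
    + (vcross (x, y) (x + dx, y + dy) (corner (x, y) (-1) l)
      - vcross (x, y) (x + dx, y + dy) (corner (x, y) 1 l) - 0 + 0) = dy := by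
  rw [vcross_corner _ _ _ _ _ hl, vcross_corner _ _ _ _ _ hl,
    vcross_corner _ _ _ _ _ hl, vcross_corner _ _ _ _ _ hl]
  simp only [Prod.mk.injEq]
  rcases hd with ⟨rfl, rfl⟩ | ⟨rfl, rfl⟩ | ⟨rfl, rfl⟩ | ⟨rfl, rfl⟩ <;>
    rcases hl with rfl | rfl <;>
    split_ifs <;> omega

set_option maxHeartbeats 8000000 in
/-- Boundary evaluation for the left vertical pair of corners (with potential). -/
private lemma boundaryV (x y dx dy : ℤ)
    (hd : dx = 1 ∧ dy = 0 ∨ dx = -1 ∧ dy = 0 ∨ dx = 0 ∧ dy = 1 ∨ dx = 0 ∧ dy = -1) :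
    (vcross (x - dx, y - dy) (x, y) (corner (x, y) (-1) (-1))
      - vcross (x - dx, y - dy) (x, y) (corner (x, y) (-1) 1)
      - (if 2 * x + (-1) < 2 * x ∧ y = y then (1 : ℤ) else 0)
      + (if 2 * x + (-1) < 2 * (x - dx) ∧ y - dy = y then (1 : ℤ) else 0))
    + (vcross (x, y) (x + dx, y + dy) (corner (x, y) (-1) (-1))
      - vcross (x, y) (x + dx, y + dy) (corner (x, y) (-1) 1)
      - (if 2 * x + (-1) < 2 * (x + dx) ∧ y + dy = y then (1 : ℤ) else 0)
      + (if 2 * x + (-1) < 2 * x ∧ y = y then (1 : ℤ) else 0)) = -dx := by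
  rw [vcross_corner _ _ _ _ _ (Or.inl rfl), vcross_corner _ _ _ _ _ (Or.inr rfl),
    vcross_corner _ _ _ _ _ (Or.inl rfl), vcross_corner _ _ _ _ _ (Or.inr rfl)]
  simp only [Prod.mk.injEq]
  rcases hd with ⟨rfl, rfl⟩ | ⟨rfl, rfl⟩ | ⟨rfl, rfl⟩ | ⟨rfl, rfl⟩ <;>
    split_ifs <;> omega

/-- Second-stage assembly from the three corner differences. -/
private lemma assemble' (γ : LatticeCycle) (v : ℤ × ℤ) (dx dy : ℤ)
    (hd : dx = 1 ∧ dy = 0 ∨ dx = -1 ∧ dy = 0 ∨ dx = 0 ∧ dy = 1 ∨ dx = 0 ∧ dy = -1)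
    (hAC : wind γ (corner v (-1) (-1)) - wind γ (corner v 1 (-1)) = dy)
    (hBD : wind γ (corner v (-1) 1) - wind γ (corner v 1 1) = dy)
    (hAB : wind γ (corner v (-1) (-1)) - wind γ (corner v (-1) 1) = -dx) :
    ∃ k : ℤ,
      ({wind γ (corner v (-1) (-1)), wind γ (corner v (-1) 1),
        wind γ (corner v 1 (-1)), wind γ (corner v 1 1)} : Multiset ℤ) =
        ({k, k, k + 1, k + 1} : Multiset ℤ) ∧
      metricw γ v = (k : ℚ) + 1/2 ∧ topw γ v = (k : ℚ) + 1/2 ∧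
      topw γ v - metricw γ v = 0 := by
  rcases hd with ⟨h1, h2⟩ | ⟨h1, h2⟩ | ⟨h1, h2⟩ | ⟨h1, h2⟩ <;> subst h1 <;> subst h2
  · -- d = (1,0) : A = C, B = D, B = A + 1
    have eB : wind γ (corner v (-1) 1) = wind γ (corner v (-1) (-1)) + 1 := by omega
    have eC : wind γ (corner v 1 (-1)) = wind γ (corner v (-1) (-1)) := by omega
    have eD : wind γ (corner v 1 1) = wind γ (corner v (-1) (-1)) + 1 := by omega
    refine assemble γ v (wind γ (corner v (-1) (-1))) ?_
    rw [eB, eC, eD]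
    exact multiset_alt4 _ _
  · -- d = (-1,0) : A = B + 1
    have eA : wind γ (corner v (-1) (-1)) = wind γ (corner v (-1) 1) + 1 := by omega
    have eC : wind γ (corner v 1 (-1)) = wind γ (corner v (-1) 1) + 1 := by omega
    have eD : wind γ (corner v 1 1) = wind γ (corner v (-1) 1) := by omega
    refine assemble γ v (wind γ (corner v (-1) 1)) ?_
    rw [eA, eC, eD]
    exact (multiset_alt4 _ _).trans (multiset_swap4 _ _)
  · -- d = (0,1) : A = B = C + 1
    have eA : wind γ (corner v (-1) (-1)) = wind γ (corner v 1 (-1)) + 1 := by omega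
    have eB : wind γ (corner v (-1) 1) = wind γ (corner v 1 (-1)) + 1 := by omega
    have eD : wind γ (corner v 1 1) = wind γ (corner v 1 (-1)) := by omega
    refine assemble γ v (wind γ (corner v 1 (-1))) ?_
    rw [eA, eB, eD]
    exact multiset_swap4 _ _
  · -- d = (0,-1) : A = B, C = D = A + 1
    have eB : wind γ (corner v (-1) 1) = wind γ (corner v (-1) (-1)) := by omega
    have eC : wind γ (corner v 1 (-1)) = wind γ (corner v (-1) (-1)) + 1 := by omega
    have eD : wind γ (corner v 1 1) = wind γ (corner v (-1) (-1)) + 1 := by omega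
    refine assemble γ v (wind γ (corner v (-1) (-1))) ?_
    rw [eB, eC, eD]

end Aux

/-- At a vertex `v = vᵢ` of `γ` where `γ` goes straight
(`d_out = d_in`), there is `k ∈ ℤ` such that exactly two of the four points of
`N_v` have winding number `k` and the other two have winding number `k+1`;
consequently `metricw(γ,v) = topw(γ,v) = k + 1/2` and
`topw(γ,v) - metricw(γ,v) = 0`. -/
theorem weights_at_straight_vertex (γ : LatticeCycle) (v : ℤ × ℤ) (i : ℕ)
    (hi : i < γ.n) (hvi : γ.v i = v)
    (hstraight : γ.v (i + 1) - γ.v i = γ.v (i + γ.n) - γ.v (i + γ.n - 1)) :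
    ∃ k : ℤ,
      ({wind γ (corner v (-1) (-1)), wind γ (corner v (-1) 1),
        wind γ (corner v 1 (-1)), wind γ (corner v 1 1)} : Multiset ℤ) =
        ({k, k, k + 1, k + 1} : Multiset ℤ) ∧
      metricw γ v = (k : ℚ) + 1/2 ∧ topw γ v = (k : ℚ) + 1/2 ∧
      topw γ v - metricw γ v = 0 := by
  obtain ⟨x, y⟩ := v
  have h4 := γ.four_le
  set ip := if i = 0 then γ.n - 1 else i - 1 with hip
  have hiplt : ip < γ.n := by rw [hip]; split_ifs <;> omega
  have hipne : ip ≠ i := by rw [hip]; split_ifs <;> omega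
  have hipsucc : γ.v (ip + 1) = γ.v i := by
    rw [hip]
    split_ifs with h0
    · subst h0
      rw [show γ.n - 1 + 1 = 0 + γ.n from by omega, γ.periodic]
    · congr 1
      omega
  have hpred : γ.v ip = γ.v i - (γ.v (i + 1) - γ.v i) := by
    have hper : γ.v (i + γ.n) = γ.v i := γ.periodic i
    have hidx : γ.v (i + γ.n - 1) = γ.v ip := by
      rw [hip]
      split_ifs with h0
      · subst h0
        congr 1
        omega
      · rw [show i + γ.n - 1 = (i - 1) + γ.n from by omega, γ.periodic]
    rw [hstraight, hper, hidx, sub_sub_cancel]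
  have huniq : ∀ j, j < γ.n → j ≠ ip → j ≠ i → γ.v j ≠ γ.v i ∧ γ.v (j + 1) ≠ γ.v i := by
    intro j hj hj1 hj2
    constructor
    · intro h
      exact hj2 (γ.inj j i hj hi h)
    · intro h
      by_cases hjn : j + 1 < γ.n
      · have hji := γ.inj (j + 1) i hjn hi h
        rw [hip] at hj1
        split_ifs at hj1 <;> omega
      · have hjeq : j + 1 = γ.n := by omega
        have h0 : γ.v (j + 1) = γ.v 0 := by
          rw [hjeq, show γ.n = 0 + γ.n from (Nat.zero_add _).symm, γ.periodic]
        have : (0 : ℕ) = i := γ.inj 0 i (by omega) hi (h0.symm.trans h)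
        rw [hip] at hj1
        split_ifs at hj1 <;> omega
  have hv1 : γ.v (ip + 1) = (x, y) := hipsucc.trans hvi
  have hH1 : ∀ l : ℤ, (l = -1 ∨ l = 1) → ∀ j, j < γ.n → γ.v j ≠ γ.v i → γ.v (j + 1) ≠ γ.v i →
      vcross (γ.v j) (γ.v (j + 1)) (corner (x, y) (-1) l)
        - vcross (γ.v j) (γ.v (j + 1)) (corner (x, y) 1 l)
      = (fun _ : ℤ × ℤ => (0 : ℤ)) (γ.v (j + 1)) - (fun _ : ℤ × ℤ => (0 : ℤ)) (γ.v j) := by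
    intro l hl j hj h1 h2
    rw [hvi] at h1 h2
    rw [edgeH x y l hl _ _ (γ.step j) h1 h2]
    simp
  have hH2 : ∀ j, j < γ.n → γ.v j ≠ γ.v i → γ.v (j + 1) ≠ γ.v i →
      vcross (γ.v j) (γ.v (j + 1)) (corner (x, y) (-1) (-1))
        - vcross (γ.v j) (γ.v (j + 1)) (corner (x, y) (-1) 1)
      = (fun u : ℤ × ℤ => if 2 * x + (-1) < 2 * u.1 ∧ u.2 = y then (1 : ℤ) else 0) (γ.v (j + 1))
        - (fun u : ℤ × ℤ => if 2 * x + (-1) < 2 * u.1 ∧ u.2 = y then (1 : ℤ) else 0) (γ.v j) := by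
    intro j hj h1 h2
    rw [hvi] at h1 h2
    exact edgeV x y (-1) (Or.inl rfl) _ _ (γ.step j) h1 h2
  have dAC := wind_sub γ i ip hi hiplt hipne huniq (corner (x, y) (-1) (-1))
    (corner (x, y) 1 (-1)) (fun _ => 0) (hH1 (-1) (Or.inl rfl))
  have dBD := wind_sub γ i ip hi hiplt hipne huniq (corner (x, y) (-1) 1)
    (corner (x, y) 1 1) (fun _ => 0) (hH1 1 (Or.inr rfl))
  have dAB := wind_sub γ i ip hi hiplt hipne huniq (corner (x, y) (-1) (-1))
    (corner (x, y) (-1) 1)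
    (fun u : ℤ × ℤ => if 2 * x + (-1) < 2 * u.1 ∧ u.2 = y then (1 : ℤ) else 0) hH2
  have hdirs : ∃ dx dy : ℤ,
      (dx = 1 ∧ dy = 0 ∨ dx = -1 ∧ dy = 0 ∨ dx = 0 ∧ dy = 1 ∨ dx = 0 ∧ dy = -1) ∧
      γ.v (i + 1) - γ.v i = (dx, dy) := by
    rcases γ.step i with hd | hd | hd | hd
    · exact ⟨1, 0, Or.inl ⟨rfl, rfl⟩, hd⟩
    · exact ⟨-1, 0, Or.inr (Or.inl ⟨rfl, rfl⟩), hd⟩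
    · exact ⟨0, 1, Or.inr (Or.inr (Or.inl ⟨rfl, rfl⟩)), hd⟩
    · exact ⟨0, -1, Or.inr (Or.inr (Or.inr ⟨rfl, rfl⟩)), hd⟩
  obtain ⟨dx, dy, hdd, hd⟩ := hdirs
  have hv3 : γ.v (i + 1) = (x + dx, y + dy) := by
    have h' : γ.v (i + 1) = γ.v i + (dx, dy) := by rw [← hd]; abel
    rw [h', hvi, Prod.mk_add_mk]
  have hv0 : γ.v ip = (x - dx, y - dy) := by
    rw [hpred, hd, hvi, Prod.mk_sub_mk]
  rw [hv0, hv1, hvi, hv3] at dAC dBD dAB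
  clear hH1 hH2 huniq hpred hipsucc hv1 hv3 hv0 hd hvi hi hiplt hipne
  have hAC : wind γ (corner (x, y) (-1) (-1)) - wind γ (corner (x, y) 1 (-1)) = dy := by
    rw [dAC]
    exact boundaryH x y dx dy (-1) (Or.inl rfl) hdd
  have hBD : wind γ (corner (x, y) (-1) 1) - wind γ (corner (x, y) 1 1) = dy := by
    rw [dBD]
    exact boundaryH x y dx dy 1 (Or.inr rfl) hdd
  have hAB : wind γ (corner (x, y) (-1) (-1)) - wind γ (corner (x, y) (-1) 1) = -dx := by
    rw [dAB]
    exact boundaryV x y dx dy hdd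
  exact assemble' γ (x, y) dx dy hdd hAC hBD hAB
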